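/- As an identity of formal power series in variables D_+ and D_-: ((1 - e^{-D_+ - D_-})/(D_+ + D_-)) \cdot (D_+/(1 - e^{-D_+})) \cdot (D_- /(1 - e^{-D_-})) - 1 = (D_+ D_-)/(D_+ + D_-) \cdot ( (1/D_+)(D_+/(1-e^{-D_+}) - D_+/2 - 1) + (1/D_-)(D_- /(1-e^{-D_-}) - D_- /2 - 1) ). -/

import Mathlib

open MvPowerSeries

/-- `e^{-D₊-D₋}` in `ℚ[[D₊,D₋]]`: the coefficient of `D₊^a D₋^b` is `(-1)^{a+b}/(a! b!)`. -/
noncomputable def expNegSum : MvPowerSeries (Fin 2) ℚ :=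
  fun d : Fin 2 →₀ ℕ => (-1 : ℚ) ^ (d 0 + d 1) / ((d 0).factorial * (d 1).factorial)

/-- The Todd-type series `D₊/(1 - e^{-D₊}) = ∑_n B'_n D₊^n / n!` (with `B'_1 = 1/2`). -/
noncomputable def ToddPlus : MvPowerSeries (Fin 2) ℚ :=
  fun d : Fin 2 →₀ ℕ => if d 1 = 0 then bernoulli' (d 0) / (d 0).factorial else 0

/-- The Todd-type series `D₋/(1 - e^{-D₋})`. -/
noncomputable def ToddMinus : MvPowerSeries (Fin 2) ℚ :=
  fun d : Fin 2 →₀ ℕ => if d 0 = 0 then bernoulli' (d 1) / (d 1).factorial else 0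

/-- `(1/D₊)(D₊/(1-e^{-D₊}) - D₊/2 - 1) = ∑_{r ≥ 2} B_r D₊^{r-1}/r!`. -/
noncomputable def QPlus : MvPowerSeries (Fin 2) ℚ :=
  fun d : Fin 2 →₀ ℕ =>
    if d 1 = 0 ∧ 1 ≤ d 0 then bernoulli' (d 0 + 1) / (d 0 + 1).factorial else 0

/-- `(1/D₋)(D₋/(1-e^{-D₋}) - D₋/2 - 1)`. -/
noncomputable def QMinus : MvPowerSeries (Fin 2) ℚ :=
  fun d : Fin 2 →₀ ℕ =>
    if d 0 = 0 ∧ 1 ≤ d 1 then bernoulli' (d 1 + 1) / (d 1 + 1).factorial else 0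

/-! ### Auxiliary development -/

/-- Embedding of one-variable power series into `ℚ[[D₊,D₋]]` using variable `i`. -/
noncomputable def s3emb (i : Fin 2) (f : PowerSeries ℚ) : MvPowerSeries (Fin 2) ℚ :=
  fun d => if d = Finsupp.single i (d i) then PowerSeries.coeff (d i) f else 0

lemma s3coeff_emb (i : Fin 2) (f : PowerSeries ℚ) (d : Fin 2 →₀ ℕ) :
    MvPowerSeries.coeff d (s3emb i f)
      = if d = Finsupp.single i (d i) then PowerSeries.coeff (d i) f else 0 := rfl

lemma s3emb_mul (i : Fin 2) (f g : PowerSeries ℚ) :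
    s3emb i f * s3emb i g = s3emb i (f * g) := by
  ext d
  rw [MvPowerSeries.coeff_mul, s3coeff_emb]
  by_cases hd : d = Finsupp.single i (d i)
  · rw [if_pos hd, PowerSeries.coeff_mul]
    conv_lhs => rw [hd]
    rw [Finsupp.antidiagonal_single, Finset.sum_map]
    refine Finset.sum_congr rfl fun p hp => ?_
    simp [s3coeff_emb, Finsupp.single_eq_same]
  · rw [if_neg hd]
    refine Finset.sum_eq_zero fun p hp => ?_
    rw [Finset.HasAntidiagonal.mem_antidiagonal] at hp
    by_cases h1 : p.1 = Finsupp.single i (p.1 i)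
    · by_cases h2 : p.2 = Finsupp.single i (p.2 i)
      · exfalso
        apply hd
        have hsum : d = Finsupp.single i (p.1 i + p.2 i) := by
          rw [Finsupp.single_add, ← h1, ← h2, ← hp]
        rw [hsum, Finsupp.single_eq_same]
      · rw [s3coeff_emb, s3coeff_emb, if_neg h2, mul_zero]
    · rw [s3coeff_emb, if_neg h1, zero_mul]

lemma s3emb_one (i : Fin 2) : s3emb i 1 = 1 := by
  ext d
  rw [s3coeff_emb, MvPowerSeries.coeff_one, PowerSeries.coeff_one]
  by_cases h0 : d = 0
  · subst h0; simp
  · rw [if_neg h0]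
    by_cases hd : d = Finsupp.single i (d i)
    · rw [if_pos hd, if_neg]
      intro h
      apply h0
      rw [hd, h, Finsupp.single_zero]
    · rw [if_neg hd]

lemma s3emb_X (i : Fin 2) : s3emb i PowerSeries.X = MvPowerSeries.X i := by
  ext d
  rw [s3coeff_emb, MvPowerSeries.coeff_X, PowerSeries.coeff_X]
  by_cases h1 : d = Finsupp.single i 1
  · subst h1; simp
  · rw [if_neg h1]
    by_cases hd : d = Finsupp.single i (d i)
    · rw [if_pos hd, if_neg]
      intro h
      apply h1
      rw [hd, h]
    · rw [if_neg hd]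

lemma s3emb_C (i : Fin 2) (a : ℚ) :
    s3emb i (PowerSeries.C a) = (MvPowerSeries.C : ℚ →+* MvPowerSeries (Fin 2) ℚ) a := by
  ext d
  rw [s3coeff_emb, MvPowerSeries.coeff_C, PowerSeries.coeff_C]
  by_cases h0 : d = 0
  · subst h0; simp
  · rw [if_neg h0]
    by_cases hd : d = Finsupp.single i (d i)
    · rw [if_pos hd, if_neg]
      intro h
      apply h0
      rw [hd, h, Finsupp.single_zero]
    · rw [if_neg hd]

lemma s3emb_sub (i : Fin 2) (f g : PowerSeries ℚ) :
    s3emb i (f - g) = s3emb i f - s3emb i g := by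
  ext d
  rw [map_sub, s3coeff_emb, s3coeff_emb, s3coeff_emb, map_sub]
  split_ifs <;> simp

lemma s3fin2_decomp (d : Fin 2 →₀ ℕ) :
    d = Finsupp.single 0 (d 0) + Finsupp.single 1 (d 1) := by
  ext k
  fin_cases k <;> simp [Finsupp.single_apply]

lemma s3single0_iff (d : Fin 2 →₀ ℕ) : d 1 = 0 ↔ d = Finsupp.single 0 (d 0) := by
  constructor
  · intro h
    conv_lhs => rw [s3fin2_decomp d]
    rw [h, Finsupp.single_zero, add_zero]
  · intro hd
    conv_lhs => rw [hd]
    simp [Finsupp.single_apply]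

lemma s3single1_iff (d : Fin 2 →₀ ℕ) : d 0 = 0 ↔ d = Finsupp.single 1 (d 1) := by
  constructor
  · intro h
    conv_lhs => rw [s3fin2_decomp d]
    rw [h, Finsupp.single_zero, zero_add]
  · intro hd
    conv_lhs => rw [hd]
    simp [Finsupp.single_apply]

/-- `e^{-X}` as a one-variable power series. -/
noncomputable def s3E : PowerSeries ℚ := PowerSeries.evalNegHom (PowerSeries.exp ℚ)

/-- `(1/X)(X/(1-e^{-X}) - X/2 - 1)` as a one-variable power series. -/
noncomputable def s3Qf : PowerSeries ℚ :=
  PowerSeries.mk fun n => if 1 ≤ n then (bernoulli' (n + 1) / (n + 1).factorial : ℚ) else 0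

lemma s3coeff_E (n : ℕ) : PowerSeries.coeff n s3E = (-1) ^ n / n.factorial := by
  simp [s3E, PowerSeries.evalNegHom, PowerSeries.coeff_rescale, PowerSeries.coeff_exp,
    Algebra.algebraMap_self, mul_one_div]
  ring

lemma s3toddPlus_eq : ToddPlus = s3emb 0 (bernoulli'PowerSeries ℚ) := by
  ext d
  by_cases h : d 1 = 0
  · have hd := (s3single0_iff d).mp h
    simp only [MvPowerSeries.coeff_apply, ToddPlus, s3emb, bernoulli'PowerSeries,
      if_pos h, if_pos hd, PowerSeries.coeff_mk, Algebra.algebraMap_self, RingHom.id_apply]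
  · have hd : d ≠ Finsupp.single 0 (d 0) := fun c => h ((s3single0_iff d).mpr c)
    simp only [MvPowerSeries.coeff_apply, ToddPlus, s3emb, if_neg h, if_neg hd]

lemma s3toddMinus_eq : ToddMinus = s3emb 1 (bernoulli'PowerSeries ℚ) := by
  ext d
  by_cases h : d 0 = 0
  · have hd := (s3single1_iff d).mp h
    simp only [MvPowerSeries.coeff_apply, ToddMinus, s3emb, bernoulli'PowerSeries,
      if_pos h, if_pos hd, PowerSeries.coeff_mk, Algebra.algebraMap_self, RingHom.id_apply]
  · have hd : d ≠ Finsupp.single 1 (d 1) := fun c => h ((s3single1_iff d).mpr c)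
    simp only [MvPowerSeries.coeff_apply, ToddMinus, s3emb, if_neg h, if_neg hd]

lemma s3qPlus_eq : QPlus = s3emb 0 s3Qf := by
  ext d
  by_cases h : d 1 = 0
  · have hd := (s3single0_iff d).mp h
    simp only [MvPowerSeries.coeff_apply, QPlus, s3emb, s3Qf, if_pos hd,
      PowerSeries.coeff_mk, h, true_and]
  · have hd : d ≠ Finsupp.single 0 (d 0) := fun c => h ((s3single0_iff d).mpr c)
    simp [MvPowerSeries.coeff_apply, QPlus, s3emb, if_neg hd, h]

lemma s3qMinus_eq : QMinus = s3emb 1 s3Qf := by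
  ext d
  by_cases h : d 0 = 0
  · have hd := (s3single1_iff d).mp h
    simp only [MvPowerSeries.coeff_apply, QMinus, s3emb, s3Qf, if_pos hd,
      PowerSeries.coeff_mk, h, true_and]
  · have hd : d ≠ Finsupp.single 1 (d 1) := fun c => h ((s3single1_iff d).mpr c)
    simp [MvPowerSeries.coeff_apply, QMinus, s3emb, if_neg hd, h]

lemma s3expNegSum_eq : expNegSum = s3emb 0 s3E * s3emb 1 s3E := by
  ext d
  rw [MvPowerSeries.coeff_mul]
  rw [Finset.sum_eq_single ((Finsupp.single (0 : Fin 2) (d 0), Finsupp.single (1 : Fin 2) (d 1)))]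
  · rw [s3coeff_emb, s3coeff_emb]
    simp only [Finsupp.single_eq_same, if_pos rfl]
    rw [s3coeff_E, s3coeff_E, MvPowerSeries.coeff_apply]
    unfold expNegSum
    rw [pow_add]
    push_cast
    ring
  · intro p hp hne
    rw [Finset.HasAntidiagonal.mem_antidiagonal] at hp
    by_cases h1 : p.1 = Finsupp.single 0 (p.1 0)
    · by_cases h2 : p.2 = Finsupp.single 1 (p.2 1)
      · exfalso
        apply hne
        have e0 : p.1 0 + p.2 0 = d 0 := by rw [← hp]; simp
        have e1 : p.1 1 + p.2 1 = d 1 := by rw [← hp]; simp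
        have z1 : p.1 1 = 0 := by
          conv_lhs => rw [h1]
          simp [Finsupp.single_apply]
        have z2 : p.2 0 = 0 := by
          conv_lhs => rw [h2]
          simp [Finsupp.single_apply]
        have w1 : p.1 0 = d 0 := by omega
        have w2 : p.2 1 = d 1 := by omega
        refine Prod.ext ?_ ?_
        · rw [h1, w1]
        · rw [h2, w2]
      · rw [s3coeff_emb, s3coeff_emb, if_neg h2, mul_zero]
    · rw [s3coeff_emb, if_neg h1, zero_mul]
  · intro hmem
    exact absurd (Finset.HasAntidiagonal.mem_antidiagonal.mpr (s3fin2_decomp d).symm) hmem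

lemma s3hB1 : (1 - s3E) * bernoulli'PowerSeries ℚ = PowerSeries.X := by
  have h1 := bernoulli'PowerSeries_mul_exp_sub_one ℚ
  have h2 : PowerSeries.exp ℚ * s3E = 1 := PowerSeries.exp_mul_exp_neg_eq_one
  linear_combination s3E * h1 + (PowerSeries.X - bernoulli'PowerSeries ℚ) * h2

lemma s3hQ1 : PowerSeries.X * s3Qf
    = bernoulli'PowerSeries ℚ - PowerSeries.C (1 / 2) * PowerSeries.X - 1 := by
  ext n
  rw [map_sub, map_sub, PowerSeries.coeff_C_mul, PowerSeries.coeff_X, PowerSeries.coeff_one]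
  match n with
  | 0 =>
    rw [PowerSeries.coeff_zero_X_mul]
    norm_num [bernoulli'PowerSeries, PowerSeries.coeff_mk, bernoulli'_zero,
      Algebra.algebraMap_self]
  | 1 =>
    rw [PowerSeries.coeff_succ_X_mul]
    norm_num [s3Qf, bernoulli'PowerSeries, PowerSeries.coeff_mk, bernoulli'_one,
      Algebra.algebraMap_self]
  | (n + 2) =>
    rw [PowerSeries.coeff_succ_X_mul, if_neg (by omega : ¬(n + 2 = 1)),
      if_neg (by omega : ¬(n + 2 = 0))]
    norm_num [s3Qf, bernoulli'PowerSeries, PowerSeries.coeff_mk, Algebra.algebraMap_self]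

lemma s3hB : (1 - s3emb 0 s3E) * ToddPlus = MvPowerSeries.X 0 := by
  have h : (1 : MvPowerSeries (Fin 2) ℚ) - s3emb 0 s3E = s3emb 0 (1 - s3E) := by
    rw [s3emb_sub, s3emb_one]
  rw [s3toddPlus_eq, h, s3emb_mul, s3hB1, s3emb_X]

lemma s3hC : (1 - s3emb 1 s3E) * ToddMinus = MvPowerSeries.X 1 := by
  have h : (1 : MvPowerSeries (Fin 2) ℚ) - s3emb 1 s3E = s3emb 1 (1 - s3E) := by
    rw [s3emb_sub, s3emb_one]
  rw [s3toddMinus_eq, h, s3emb_mul, s3hB1, s3emb_X]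

lemma s3hD : MvPowerSeries.X 0 * QPlus
    = ToddPlus - (MvPowerSeries.C : ℚ →+* MvPowerSeries (Fin 2) ℚ) (1 / 2) * MvPowerSeries.X 0 - 1 := by
  rw [s3qPlus_eq, s3toddPlus_eq, ← s3emb_X 0, ← s3emb_C 0 (1 / 2), s3emb_mul, s3emb_mul,
    ← s3emb_one 0, ← s3emb_sub, ← s3emb_sub]
  exact congrArg (s3emb 0) s3hQ1

lemma s3hD' : MvPowerSeries.X 1 * QMinus
    = ToddMinus - (MvPowerSeries.C : ℚ →+* MvPowerSeries (Fin 2) ℚ) (1 / 2) * MvPowerSeries.X 1 - 1 := by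
  rw [s3qMinus_eq, s3toddMinus_eq, ← s3emb_X 1, ← s3emb_C 1 (1 / 2), s3emb_mul, s3emb_mul,
    ← s3emb_one 1, ← s3emb_sub, ← s3emb_sub]
  exact congrArg (s3emb 1) s3hQ1

lemma s3hc : (MvPowerSeries.C : ℚ →+* MvPowerSeries (Fin 2) ℚ) (1 / 2) + (MvPowerSeries.C : ℚ →+* MvPowerSeries (Fin 2) ℚ) (1 / 2)
    = (1 : MvPowerSeries (Fin 2) ℚ) := by
  rw [← map_add]
  norm_num

/-- `((1-e^{-D₊-D₋})/(D₊+D₋))·(D₊/(1-e^{-D₊}))·(D₋/(1-e^{-D₋})) - 1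
  = (D₊D₋/(D₊+D₋))·((1/D₊)(D₊/(1-e^{-D₊}) - D₊/2 - 1) + (1/D₋)(D₋/(1-e^{-D₋}) - D₋/2 - 1))`
as formal power series; division by `D₊ + D₋` on both sides is legitimate (the numerators are
divisible by it), so the identity is stated after cross-multiplication by `D₊ + D₋`. -/
theorem stmt_3 :
    (1 - expNegSum) * ToddPlus * ToddMinus -
        ((MvPowerSeries.X 0 : MvPowerSeries (Fin 2) ℚ) + MvPowerSeries.X 1) =
      (MvPowerSeries.X 0 : MvPowerSeries (Fin 2) ℚ) * MvPowerSeries.X 1 *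
        (QPlus + QMinus) := by
  rw [s3expNegSum_eq]
  have hprod : ((1 - s3emb 0 s3E) * ToddPlus - MvPowerSeries.X 0) *
      ((1 - s3emb 1 s3E) * ToddMinus - MvPowerSeries.X 1) = 0 := by
    rw [s3hB, s3hC]
    ring
  linear_combination (-(MvPowerSeries.X 1 : MvPowerSeries (Fin 2) ℚ)) * s3hD +
    (-(MvPowerSeries.X 0 : MvPowerSeries (Fin 2) ℚ)) * s3hD' +
    ((MvPowerSeries.X 0 : MvPowerSeries (Fin 2) ℚ) * MvPowerSeries.X 1) * s3hc +
    (s3emb 0 s3E * ToddPlus) * s3hC + (s3emb 1 s3E * ToddMinus) * s3hB + hprod
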